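/- Let G be a loopless graph, v a vertex, and s = {v_0, ..., v_n} an independent set of G. Then the intersection of the subcomplexes A_{v_i} = I_{G − st(v_i)} * v_i over i = 0,...,n equals I_{G − st(v_0) − ... − st(v_n)} * Δ^n, where Δ^n is the simplex on the vertex set s; in particular this intersection is contractible. -/

import Mathlib

open scoped unitInterval

/-- The defining relation for the topological join of two spaces. -/
inductive JoinRel (X Y : Type*) :
    (X × Y × I) ⊕ (X ⊕ Y) → (X × Y × I) ⊕ (X ⊕ Y) → Prop
  | zero (x : X) (y : Y) : JoinRel X Y (.inl (x, y, 0)) (.inr (.inl x))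
  | one (x : X) (y : Y) : JoinRel X Y (.inl (x, y, 1)) (.inr (.inr y))

/-- The topological join `X * Y`. -/
def TopJoin (X Y : Type*) [TopologicalSpace X] [TopologicalSpace Y] : Type _ :=
  Quot (JoinRel X Y)

instance (X Y : Type*) [TopologicalSpace X] [TopologicalSpace Y] :
    TopologicalSpace (TopJoin X Y) := by
  unfold TopJoin; infer_instance

/-- The inclusion of the first factor into the join. -/
def TopJoin.inl {X Y : Type*} [TopologicalSpace X] [TopologicalSpace Y] (x : X) :
    TopJoin X Y :=
  Quot.mk _ (.inr (.inl x))

/-- The (unreduced) suspension, as the join with a two-point space. -/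
def Susp (X : Type*) [TopologicalSpace X] : Type _ := TopJoin X Bool

instance (X : Type*) [TopologicalSpace X] : TopologicalSpace (Susp X) :=
  inferInstanceAs (TopologicalSpace (TopJoin X Bool))

/-- The north pole of the suspension. -/
def suspApex (X : Type*) [TopologicalSpace X] : Susp X :=
  Quot.mk _ (.inr (.inr true))

/-- The wedge (one-point union) of two pointed spaces. -/
def Wedge (X Y : Type*) [TopologicalSpace X] [TopologicalSpace Y] (x0 : X) (y0 : Y) :
    Type _ :=
  Quot (fun a b : X ⊕ Y => a = Sum.inl x0 ∧ b = Sum.inr y0)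

instance (X Y : Type*) [TopologicalSpace X] [TopologicalSpace Y] (x0 : X) (y0 : Y) :
    TopologicalSpace (Wedge X Y x0 y0) := by
  unfold Wedge; infer_instance

/-- The wedge of a family of pointed spaces. -/
def WedgeFam {ι : Type*} (X : ι → Type*) [∀ i, TopologicalSpace (X i)]
    (pt : ∀ i, X i) : Type _ :=
  Quot (fun a b : Σ i, X i => ∃ i j, a = ⟨i, pt i⟩ ∧ b = ⟨j, pt j⟩)

instance {ι : Type*} (X : ι → Type*) [∀ i, TopologicalSpace (X i)] (pt : ∀ i, X i) :
    TopologicalSpace (WedgeFam X pt) := by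
  unfold WedgeFam; infer_instance

/-- The `k`-dimensional sphere. -/
abbrev nSphere (k : ℕ) : Type :=
  ↥(Metric.sphere (0 : EuclideanSpace ℝ (Fin (k + 1))) 1)

/-- A base point on the `k`-sphere. -/
noncomputable def sphereBase (k : ℕ) : nSphere k :=
  ⟨EuclideanSpace.single 0 1, by
    simp [EuclideanSpace.norm_single]⟩

/-- An abstract simplicial complex on a vertex set `V`. -/
structure AbsSimplicialComplex (V : Type*) where
  faces : Set (Finset V)
  down_closed : ∀ ⦃s⦄, s ∈ faces → ∀ ⦃t : Finset V⦄, t ⊆ s → t ∈ faces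

/-- The geometric realization of an abstract simplicial complex, as the space of
convex-combination weight functions supported on a face. -/
def AbsSimplicialComplex.space {V : Type*} (K : AbsSimplicialComplex V) : Type _ :=
  {f : V → ℝ // (∀ x, 0 ≤ f x) ∧
    ∃ s ∈ K.faces, (∀ x, x ∉ s → f x = 0) ∧ ∑ x ∈ s, f x = 1}

instance {V : Type*} (K : AbsSimplicialComplex V) : TopologicalSpace K.space := by
  unfold AbsSimplicialComplex.space; infer_instance

/-- The independence complex of a graph, restricted to vertices in `A`:
faces are the independent sets of `G` contained in `A`. -/
def indepComplexOn {V : Type*} (G : SimpleGraph V) (A : Set V) :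
    AbsSimplicialComplex V where
  faces := {s | ↑s ⊆ A ∧ ∀ a ∈ s, ∀ b ∈ s, ¬ G.Adj a b}
  down_closed := by
    intro s hs t ht
    exact ⟨fun x hx => hs.1 (ht hx), fun a ha b hb => hs.2 a (ht ha) b (ht hb)⟩

/-- The independence complex of a graph. -/
def indepComplex {V : Type*} (G : SimpleGraph V) : AbsSimplicialComplex V :=
  indepComplexOn G Set.univ

/-- The closed star of a vertex: the vertex together with its neighbors. -/
def stSet {V : Type*} (G : SimpleGraph V) (v : V) : Set V :=
  insert v (G.neighborSet v)

lemma indepComplexOn_mono {V : Type*} (G : SimpleGraph V) {A B : Set V} (h : A ⊆ B) :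
    (indepComplexOn G A).faces ⊆ (indepComplexOn G B).faces :=
  fun _ hs => ⟨fun x hx => h (hs.1 hx), hs.2⟩

/-- The inclusion of the realization of a subcomplex. -/
def inclMap {V : Type*} (K L : AbsSimplicialComplex V) (h : K.faces ⊆ L.faces) :
    C(K.space, L.space) where
  toFun := fun f => ⟨f.1, f.2.1, by
    obtain ⟨s, hs, h2⟩ := f.2.2
    exact ⟨s, h hs, h2⟩⟩
  continuous_toFun := Continuous.subtype_mk continuous_subtype_val _
/-- The cone over `K` with apex `v`, inside the same vertex set. -/
def coneAt {V : Type*} [DecidableEq V] (v : V) (K : AbsSimplicialComplex V) :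
    AbsSimplicialComplex V where
  faces := {s | s.erase v ∈ K.faces}
  down_closed := by
    intro s hs t ht
    exact K.down_closed hs (Finset.erase_subset_erase _ ht)

/-- The cone over `K` with a fresh apex vertex `none`. -/
def coneVertex {V : Type*} (K : AbsSimplicialComplex V) :
    AbsSimplicialComplex (Option V) where
  faces := {s | Finset.eraseNone s ∈ K.faces}
  down_closed := by
    intro s hs t ht
    refine K.down_closed hs ?_
    intro x hx
    rw [Finset.mem_eraseNone] at hx ⊢
    exact ht hx

/-- The join of two simplicial complexes on disjoint vertex sets. -/
def complexJoin {V W : Type*} (K : AbsSimplicialComplex V)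
    (L : AbsSimplicialComplex W) : AbsSimplicialComplex (V ⊕ W) where
  faces := {s | s.toLeft ∈ K.faces ∧ s.toRight ∈ L.faces}
  down_closed := by
    intro s hs t ht
    constructor
    · refine K.down_closed hs.1 ?_
      intro x hx; rw [Finset.mem_toLeft] at hx ⊢; exact ht hx
    · refine L.down_closed hs.2 ?_
      intro x hx; rw [Finset.mem_toRight] at hx ⊢; exact ht hx

/-- The disjoint union of two graphs. -/
def graphSum {V W : Type*} (G : SimpleGraph V) (H : SimpleGraph W) :
    SimpleGraph (V ⊕ W) where
  Adj a b :=
    match a, b with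
    | .inl x, .inl y => G.Adj x y
    | .inr x, .inr y => H.Adj x y
    | _, _ => False
  symm := by refine ⟨?_⟩; rintro (x | x) (y | y) h; exacts [G.adj_symm h, h.elim, h.elim, H.adj_symm h]
  loopless := by refine ⟨?_⟩; rintro (x | x) h; exacts [G.irrefl h, H.irrefl h]

/-- The subcomplex `A_u = I_{G - st(u)} * u` of the independence complex:
simplices `σ` with `σ ∪ {u}` independent. -/
def Afan {V : Type*} [DecidableEq V] (G : SimpleGraph V) (u : V) :
    AbsSimplicialComplex V where
  faces := {s | ∀ a ∈ insert u s, ∀ b ∈ insert u s, ¬ G.Adj a b}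
  down_closed := by
    intro s hs t ht a ha b hb
    exact hs a (Finset.insert_subset_insert u ht ha) b (Finset.insert_subset_insert u ht hb)

/-- The join of a complex with the full simplex on the vertex set `s`. -/
def joinSimplex {V : Type*} [DecidableEq V] (s : Finset V)
    (K : AbsSimplicialComplex V) : AbsSimplicialComplex V where
  faces := {t | t \ s ∈ K.faces}
  down_closed := by
    intro t ht r hr
    exact K.down_closed ht (Finset.sdiff_subset_sdiff hr (subset_refl s))

/-- The complex `K(G, v)` of Theorem 6.4: independent sets of `G - st(v)`
missing `W_u = lk(u) - v` entirely, for at least one neighbor `u` of `v`. -/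
def Kcomplex {V : Type*} (G : SimpleGraph V) (v : V) : AbsSimplicialComplex V where
  faces := {s | s ∈ (indepComplexOn G (stSet G v)ᶜ).faces ∧
      ∃ u, G.Adj v u ∧ ∀ w ∈ s, ¬ (G.Adj u w ∧ w ≠ v)}
  down_closed := by
    intro s hs t ht
    refine ⟨(indepComplexOn G (stSet G v)ᶜ).down_closed hs.1 ht, ?_⟩
    obtain ⟨u, hu, hw⟩ := hs.2
    exact ⟨u, hu, fun w hwt => hw w (ht hwt)⟩

/-- Auxiliary relation for subdividing the edge `uv` into a path of four edges
through three new vertices `0, 1, 2`. -/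
def sRel {V : Type*} (G : SimpleGraph V) (u v : V) :
    V ⊕ Fin 3 → V ⊕ Fin 3 → Prop
  | .inl x, .inl y => G.Adj x y ∧ ¬((x = u ∧ y = v) ∨ (x = v ∧ y = u))
  | .inl x, .inr i => (x = u ∧ i = 0) ∨ (x = v ∧ i = 2)
  | .inr i, .inr j => (i : ℕ) + 1 = (j : ℕ)
  | .inr _, .inl _ => False

/-- The graph obtained from `G` by replacing the edge `uv` by the path
`u - 0 - 1 - 2 - v` of four edges. -/
def subdivide4 {V : Type*} (G : SimpleGraph V) (u v : V) :
    SimpleGraph (V ⊕ Fin 3) where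
  Adj a b := sRel G u v a b ∨ sRel G u v b a
  symm := ⟨fun _ _ h => h.symm⟩
  loopless := by
    refine ⟨?_⟩
    rintro (x | i) h
    · rcases h with h | h <;> exact G.irrefl h.1
    · rcases h with h | h <;> (simp only [sRel] at h; omega)

lemma stSet_compl_subset {V : Type*} (G : SimpleGraph V) (v : V) :
    (stSet G v)ᶜ ⊆ ({v} : Set V)ᶜ :=
  Set.compl_subset_compl.mpr fun x hx => by
    rw [Set.mem_singleton_iff] at hx
    rw [hx]
    exact Set.mem_insert v _

/-- The inclusion of the realization of `I_{G - st(v)}` into that of `I_{G - v}`. -/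
def linkIncl {V : Type*} (G : SimpleGraph V) (v : V) :
    C((indepComplexOn G (stSet G v)ᶜ).space, (indepComplexOn G ({v} : Set V)ᶜ).space) :=
  inclMap _ _ (indepComplexOn_mono G (stSet_compl_subset G v))
lemma joinSimplex_contractible {V : Type*} [DecidableEq V] (s : Finset V)
    (K : AbsSimplicialComplex V) (v₀ : V) (hv₀ : v₀ ∈ s)
    (h0 : (∅ : Finset V) ∈ K.faces) :
    ContractibleSpace (joinSimplex s K).space := by
  classical
  set p : (joinSimplex s K).space := ⟨fun x => if x = v₀ then (1:ℝ) else 0,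
    fun x => by positivity,
    ⟨{v₀}, by
      show ({v₀} : Finset V) \ s ∈ K.faces
      have : ({v₀} : Finset V) \ s = ∅ := by
        simp [Finset.sdiff_eq_empty_iff_subset, Finset.singleton_subset_iff, hv₀]
      rw [this]; exact h0,
      fun x hx => by simp at hx; simp [hx],
      by simp⟩⟩ with hp
  rw [contractible_iff_id_nullhomotopic]
  refine ⟨p, ⟨⟨⟨fun q => ⟨fun x => (1 - q.1.1) * q.2.1 x + q.1.1 * p.1 x, ?_, ?_⟩, ?_⟩, ?_, ?_⟩⟩⟩
  · intro x
    have h1 := q.2.2.1 x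
    have h2 := p.2.1 x
    have h3 := q.1.2.1
    have h4 := q.1.2.2
    have h5 := mul_nonneg (by linarith : (0:ℝ) ≤ 1 - q.1.1) h1
    have h6 := mul_nonneg h3 h2
    dsimp only
    linarith
  · obtain ⟨t, ht, hsupp, hsum⟩ := q.2.2.2
    refine ⟨t ∪ {v₀}, ?_, ?_, ?_⟩
    · show (t ∪ {v₀}) \ s ∈ K.faces
      refine K.down_closed ht ?_
      intro x hx
      simp only [Finset.mem_sdiff, Finset.mem_union, Finset.mem_singleton] at hx ⊢
      rcases hx with ⟨hx1 | hx1, hx2⟩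
      · exact ⟨hx1, hx2⟩
      · exact absurd (hx1 ▸ hv₀) hx2
    · intro x hx
      simp only [Finset.mem_union, Finset.mem_singleton, not_or] at hx
      dsimp only
      rw [hsupp x hx.1]
      simp [hp, hx.2]
    · have hA : ∑ x ∈ t ∪ {v₀}, (q.2.1 : V → ℝ) x = 1 := by
        rw [← Finset.sum_subset (Finset.subset_union_left)
          (fun x _ hx => hsupp x hx)]
        exact hsum
      have hB : ∑ x ∈ t ∪ {v₀}, p.1 x = 1 := by
        rw [← Finset.sum_subset (Finset.subset_union_right :
            ({v₀} : Finset V) ⊆ t ∪ {v₀})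
          (fun x _ hx => by simp only [Finset.mem_singleton] at hx; simp [hp, hx])]
        simp [hp]
      dsimp only
      rw [Finset.sum_add_distrib, ← Finset.mul_sum, ← Finset.mul_sum, hA, hB]
      ring
  · apply Continuous.subtype_mk
    apply continuous_pi
    intro x
    have hq2 : Continuous fun q : I × (joinSimplex s K).space => q.2.1 x :=
      (continuous_apply x).comp (continuous_subtype_val.comp continuous_snd)
    have hq1 : Continuous fun q : I × (joinSimplex s K).space => (q.1 : ℝ) :=
      continuous_subtype_val.comp continuous_fst
    exact ((continuous_const.sub hq1).mul hq2).add (hq1.mul continuous_const)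
  · intro f
    apply Subtype.ext
    funext x
    show (1 - ((0:I):ℝ)) * f.1 x + ((0:I):ℝ) * p.1 x = f.1 x
    simp
  · intro f
    apply Subtype.ext
    funext x
    show (1 - ((1:I):ℝ)) * f.1 x + ((1:I):ℝ) * p.1 x = p.1 x
    simp

/-- For an independent set `s = {v_0, …, v_n}` in `G`, the intersection
of the subcomplexes `A_{v_i} = I_{G − st(v_i)} * v_i` equals
`I_{G − st(v_0) − ⋯ − st(v_n)} * Δ^n`; in particular it is contractible. -/
theorem inter_Afan_eq_join_simplex {V : Type} [Fintype V] [DecidableEq V]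
    (G : SimpleGraph V) (s : Finset V) (hne : s.Nonempty)
    (hindep : ∀ a ∈ s, ∀ b ∈ s, ¬ G.Adj a b) :
    (⋂ v ∈ (s : Set V), (Afan G v).faces) =
      (joinSimplex s (indepComplexOn G (⋃ v ∈ (s : Set V), stSet G v)ᶜ)).faces ∧
    ContractibleSpace
      (joinSimplex s (indepComplexOn G (⋃ v ∈ (s : Set V), stSet G v)ᶜ)).space := by
  obtain ⟨v₀, hv₀⟩ := hne
  constructor
  · refine Set.ext fun τ => ?_
    simp only [Set.mem_iInter, Finset.mem_coe]
    constructor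
    · intro h
      refine ⟨?_, ?_⟩
      · intro x hx
        simp only [Finset.coe_sdiff, Set.mem_diff, Finset.mem_coe] at hx
        simp only [Set.mem_compl_iff, Set.mem_iUnion₂, not_exists]
        intro v hv hxst
        rcases Set.mem_insert_iff.mp hxst with rfl | hadj
        · exact hx.2 hv
        · exact h v hv v (Finset.mem_insert_self v τ)
            x (Finset.mem_insert_of_mem hx.1) hadj
      · intro a ha b hb
        exact h v₀ hv₀ a (Finset.mem_insert_of_mem (Finset.mem_sdiff.mp ha).1)
          b (Finset.mem_insert_of_mem (Finset.mem_sdiff.mp hb).1)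
    · intro h v hv a ha b hb hadj
      obtain ⟨hsub, hind⟩ := h
      have key : ∀ x ∈ insert v τ, x ∈ s ∨ x ∈ τ \ s := by
        intro x hx
        rcases Finset.mem_insert.mp hx with rfl | hx
        · exact Or.inl hv
        · by_cases hxs : x ∈ s
          · exact Or.inl hxs
          · exact Or.inr (Finset.mem_sdiff.mpr ⟨hx, hxs⟩)
      have nost : ∀ x ∈ τ \ s, ∀ w ∈ s, ¬ G.Adj w x := by
        intro x hx w hw hwx
        have := hsub (by exact_mod_cast hx)
        simp only [Set.mem_compl_iff, Set.mem_iUnion₂, not_exists] at this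
        exact this w hw (Set.mem_insert_iff.mpr (Or.inr hwx))
      rcases key a ha with has | has <;> rcases key b hb with hbs | hbs
      · exact hindep a has b hbs hadj
      · exact nost b hbs a has hadj
      · exact nost a has b hbs (G.adj_symm hadj)
      · exact hind a has b hbs hadj
  · apply joinSimplex_contractible _ _ v₀ hv₀
    exact ⟨by simp, by simp⟩
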